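/- Let p(x) = x^{−2} e^{−1/x} for x > 0 denote the InverseGamma(1,1) density and let m be a nonnegative integer. Then ∫₀^∞ ∫₀^∞ { Γ(0.5δ + 0.5) / (Γ(0.5δ) √δ σ) }^{m} p(σ) p(δ) dσ dδ < ∞. -/

import Mathlib

open MeasureTheory Nat
open scoped ENNReal

/-- The InverseGamma(1,1) density. -/
noncomputable def invGamma11 (x : ℝ) : ℝ := x ^ (-2 : ℝ) * Real.exp (-1 / x)

lemma gamma_half_le {x : ℝ} (hx : 0 < x) :
    Real.Gamma (x + 1/2) ≤ Real.sqrt x * Real.Gamma x := by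
  have hx1 : (0:ℝ) < x + 1 := by linarith
  have hΓx := Real.Gamma_pos_of_pos hx
  have hΓx1 := Real.Gamma_pos_of_pos hx1
  have hΓh := Real.Gamma_pos_of_pos (show (0:ℝ) < x + 1/2 by linarith)
  have hc := Real.convexOn_log_Gamma.2 (Set.mem_Ioi.2 hx) (Set.mem_Ioi.2 hx1)
      (by norm_num : (0:ℝ) ≤ 1/2) (by norm_num : (0:ℝ) ≤ 1/2) (by norm_num)
  simp only [smul_eq_mul, Function.comp_apply] at hc
  have hmid : (1/2 : ℝ) * x + (1/2 : ℝ) * (x+1) = x + 1/2 := by ring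
  rw [hmid] at hc
  have hG1 : Real.Gamma (x + 1) = x * Real.Gamma x := Real.Gamma_add_one hx.ne'
  have hrhs : (1/2:ℝ) * Real.log (Real.Gamma x) + (1/2:ℝ) * Real.log (Real.Gamma (x+1))
      = Real.log (Real.sqrt x * Real.Gamma x) := by
    rw [hG1, Real.log_mul hx.ne' hΓx.ne',
      Real.log_mul (Real.sqrt_ne_zero'.2 hx) hΓx.ne', Real.log_sqrt hx.le]
    ring
  rw [hrhs] at hc
  have := Real.exp_le_exp.2 hc
  rwa [Real.exp_log hΓh, Real.exp_log (by positivity)] at this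

lemma ratio_le_one {δ : ℝ} (hδ : 0 < δ) :
    Real.Gamma (0.5 * δ + 0.5) / (Real.Gamma (0.5 * δ) * Real.sqrt δ) ≤ 1 := by
  have hx : (0:ℝ) < 0.5 * δ := by linarith
  have h := gamma_half_le hx
  have h05 : (0.5 * δ + 1/2 : ℝ) = 0.5 * δ + 0.5 := by norm_num
  rw [h05] at h
  have hsq : Real.sqrt (0.5 * δ) ≤ Real.sqrt δ := Real.sqrt_le_sqrt (by linarith)
  have hΓ := Real.Gamma_pos_of_pos hx
  rw [div_le_one (by positivity)]
  calc Real.Gamma (0.5 * δ + 0.5) ≤ Real.sqrt (0.5 * δ) * Real.Gamma (0.5 * δ) := h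
    _ ≤ Real.sqrt δ * Real.Gamma (0.5 * δ) := by
        exact mul_le_mul_of_nonneg_right hsq hΓ.le
    _ = Real.Gamma (0.5 * δ) * Real.sqrt δ := by ring

lemma pow_div_factorial_le_exp {u : ℝ} (hu : 0 ≤ u) (k : ℕ) :
    u ^ k / k ! ≤ Real.exp u := by
  refine le_trans ?_ (Real.sum_le_exp_of_nonneg hu (k+1))
  exact Finset.single_le_sum (f := fun i => u ^ i / i !)
    (fun i _ => by positivity) (Finset.self_mem_range_succ k)

lemma invGamma_pow_integrable (n : ℕ) :
    IntegrableOn (fun x : ℝ => x ^ (-(n:ℝ)-2) * Real.exp (-1/x)) (Set.Ioi 0) := by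
  have hmeas : Measurable fun x : ℝ => x ^ (-(n:ℝ)-2) * Real.exp (-1/x) := by
    fun_prop
  rw [← Set.Ioc_union_Ioi_eq_Ioi (zero_le_one (α := ℝ))]
  refine IntegrableOn.union ?_ ?_
  · refine Measure.integrableOn_of_bounded (M := ((n+2)! : ℝ)) (by simp)
      hmeas.aestronglyMeasurable ?_
    refine (ae_restrict_iff' measurableSet_Ioc).2 (ae_of_all _ fun x hx => ?_)
    obtain ⟨hx0, hx1⟩ := hx
    have hexp : Real.exp (-1/x) ≤ ((n+2)! : ℝ) * x ^ (n+2) := by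
      have h1 : ((1/x) ^ (n+2) / (n+2)! : ℝ) ≤ Real.exp (1/x) :=
        pow_div_factorial_le_exp (by positivity) (n+2)
      have h2 : (0:ℝ) < (1/x) ^ (n+2) / (n+2)! := by positivity
      rw [show (-1/x : ℝ) = -(1/x) by ring, Real.exp_neg]
      rw [inv_le_comm₀ (Real.exp_pos _) (by positivity)]
      calc ((( (n+2)! : ℝ) * x ^ (n+2)))⁻¹ = (1/x) ^ (n+2) / (n+2)! := by
            rw [one_div, inv_pow, div_eq_mul_inv, mul_inv]; ring
        _ ≤ Real.exp (1/x) := h1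
    have hx2 : x ^ (-(n:ℝ)-2) * (x:ℝ) ^ (n+2) = 1 := by
      rw [← Real.rpow_natCast x (n+2), ← Real.rpow_add hx0]
      push_cast
      norm_num
    have hpos : (0:ℝ) < x ^ (-(n:ℝ)-2) := Real.rpow_pos_of_pos hx0 _
    rw [Real.norm_eq_abs, abs_of_nonneg (by positivity)]
    calc x ^ (-(n:ℝ)-2) * Real.exp (-1/x)
        ≤ x ^ (-(n:ℝ)-2) * (((n+2)! : ℝ) * x ^ (n+2)) :=
          mul_le_mul_of_nonneg_left hexp hpos.le
      _ = ((n+2)! : ℝ) * (x ^ (-(n:ℝ)-2) * x ^ (n+2)) := by ring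
      _ = ((n+2)! : ℝ) := by rw [hx2, mul_one]
  · refine Integrable.mono (integrableOn_Ioi_rpow_of_lt (show (-2:ℝ) < -1 by norm_num)
      one_pos) hmeas.aestronglyMeasurable ?_
    refine (ae_restrict_iff' measurableSet_Ioi).2 (ae_of_all _ fun x hx => ?_)
    have hx1 : (1:ℝ) < x := hx
    have hx0 : (0:ℝ) < x := by linarith
    have h1 : x ^ (-(n:ℝ)-2) ≤ x ^ (-2:ℝ) :=
      Real.rpow_le_rpow_of_exponent_le hx1.le
        (by linarith [Nat.cast_nonneg (α := ℝ) n])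
    have h2 : Real.exp (-1/x) ≤ 1 :=
      Real.exp_le_one_iff.2 (by rw [neg_div]; exact neg_nonpos.2 (by positivity))
    rw [Real.norm_eq_abs, Real.norm_eq_abs,
      abs_of_nonneg (by positivity : (0:ℝ) ≤ x ^ (-(n:ℝ)-2) * Real.exp (-1/x)),
      abs_of_nonneg (Real.rpow_pos_of_pos hx0 _).le]
    calc x ^ (-(n:ℝ)-2) * Real.exp (-1/x)
        ≤ x ^ (-(n:ℝ)-2) * 1 := by
          exact mul_le_mul_of_nonneg_left h2 (Real.rpow_pos_of_pos hx0 _).le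
      _ = x ^ (-(n:ℝ)-2) := mul_one _
      _ ≤ x ^ (-2:ℝ) := h1

/-- Finiteness of the Student-t normalizing-constant integral against
InverseGamma(1,1) priors. -/
theorem student_t_const_inverse_gamma_integral_finite (m : ℕ) :
    ∫⁻ δ in Set.Ioi (0:ℝ), ∫⁻ σ in Set.Ioi (0:ℝ),
      ENNReal.ofReal
        ((Real.Gamma (0.5 * δ + 0.5) / (Real.Gamma (0.5 * δ) * Real.sqrt δ * σ)) ^ m *
          invGamma11 σ * invGamma11 δ) < ⊤ := by
  set g : ℝ → ℝ := fun σ => σ ^ (-(m:ℝ)-2) * Real.exp (-1/σ) with hg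
  set A : ℝ≥0∞ := ∫⁻ σ in Set.Ioi (0:ℝ), ENNReal.ofReal (g σ) with hA
  have hAfin : A < ⊤ := (invGamma_pow_integrable m).setLIntegral_lt_top
  set B : ℝ≥0∞ := ∫⁻ δ in Set.Ioi (0:ℝ), ENNReal.ofReal (invGamma11 δ) with hB
  have hBfin : B < ⊤ := by
    have h := (invGamma_pow_integrable 0).setLIntegral_lt_top
    have he : ∀ x : ℝ, invGamma11 x = x ^ (-((0:ℕ):ℝ)-2) * Real.exp (-1/x) := by
      intro x; unfold invGamma11; norm_num
    rw [hB]; simp_rw [he]; exact h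
  -- pointwise bound on the inner integral
  have hinner : ∀ δ ∈ Set.Ioi (0:ℝ),
      (∫⁻ σ in Set.Ioi (0:ℝ), ENNReal.ofReal
        ((Real.Gamma (0.5 * δ + 0.5) / (Real.Gamma (0.5 * δ) * Real.sqrt δ * σ)) ^ m *
          invGamma11 σ * invGamma11 δ)) ≤ ENNReal.ofReal (invGamma11 δ) * A := by
    intro δ hδ
    have hδ0 : (0:ℝ) < δ := hδ
    have hinvδ : 0 ≤ invGamma11 δ := by
      have := Real.rpow_pos_of_pos hδ0 (-2:ℝ)
      unfold invGamma11; positivity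
    have hbound : ∀ σ ∈ Set.Ioi (0:ℝ),
        (Real.Gamma (0.5 * δ + 0.5) / (Real.Gamma (0.5 * δ) * Real.sqrt δ * σ)) ^ m *
          invGamma11 σ * invGamma11 δ ≤ g σ * invGamma11 δ := by
      intro σ hσ
      have hσ0 : (0:ℝ) < σ := hσ
      set r : ℝ := Real.Gamma (0.5 * δ + 0.5) / (Real.Gamma (0.5 * δ) * Real.sqrt δ) with hr
      have hr0 : 0 ≤ r := by
        have h1 := Real.Gamma_pos_of_pos (show (0:ℝ) < 0.5 * δ + 0.5 by linarith)
        have h2 := Real.Gamma_pos_of_pos (show (0:ℝ) < 0.5 * δ by linarith)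
        have h3 := Real.sqrt_pos.2 hδ0
        positivity
      have hr1 : r ≤ 1 := ratio_le_one hδ0
      have hq : Real.Gamma (0.5 * δ + 0.5) / (Real.Gamma (0.5 * δ) * Real.sqrt δ * σ)
          = r * σ⁻¹ := by rw [hr]; field_simp
      have hpow : (r * σ⁻¹) ^ m ≤ (σ⁻¹) ^ m := by
        apply pow_le_pow_left₀ (by positivity)
        calc r * σ⁻¹ ≤ 1 * σ⁻¹ := by
              exact mul_le_mul_of_nonneg_right hr1 (by positivity)
          _ = σ⁻¹ := one_mul _
      have hinvσ : 0 ≤ invGamma11 σ := by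
        have := Real.rpow_pos_of_pos hσ0 (-2:ℝ)
        unfold invGamma11; positivity
      have hgσ : (σ⁻¹) ^ m * invGamma11 σ = g σ := by
        unfold invGamma11
        rw [hg]
        have : ((σ⁻¹) ^ m : ℝ) = σ ^ (-(m:ℝ)) := by
          rw [← Real.rpow_natCast σ⁻¹ m, ← Real.rpow_neg_one σ, ← Real.rpow_mul hσ0.le]
          norm_num
        rw [this, ← mul_assoc, ← Real.rpow_add hσ0]
        ring_nf
      calc (Real.Gamma (0.5 * δ + 0.5) / (Real.Gamma (0.5 * δ) * Real.sqrt δ * σ)) ^ m *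
            invGamma11 σ * invGamma11 δ
          = (r * σ⁻¹) ^ m * invGamma11 σ * invGamma11 δ := by rw [hq]
        _ ≤ (σ⁻¹) ^ m * invGamma11 σ * invGamma11 δ := by
            apply mul_le_mul_of_nonneg_right _ hinvδ
            exact mul_le_mul_of_nonneg_right hpow hinvσ
        _ = g σ * invGamma11 δ := by rw [hgσ]
    calc (∫⁻ σ in Set.Ioi (0:ℝ), ENNReal.ofReal
          ((Real.Gamma (0.5 * δ + 0.5) / (Real.Gamma (0.5 * δ) * Real.sqrt δ * σ)) ^ m *
            invGamma11 σ * invGamma11 δ))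
        ≤ ∫⁻ σ in Set.Ioi (0:ℝ), ENNReal.ofReal (g σ) * ENNReal.ofReal (invGamma11 δ) := by
          refine lintegral_mono_ae ((ae_restrict_iff' measurableSet_Ioi).2
            (ae_of_all _ fun σ hσ => ?_))
          rw [← ENNReal.ofReal_mul]
          · exact ENNReal.ofReal_le_ofReal (hbound σ hσ)
          · have hσ0 : (0:ℝ) < σ := hσ
            have h1 : (0:ℝ) < σ ^ (-(m:ℝ)-2) := Real.rpow_pos_of_pos hσ0 _
            rw [hg]; positivity
      _ = A * ENNReal.ofReal (invGamma11 δ) := by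
          rw [hA, lintegral_mul_const' _ _ ENNReal.ofReal_ne_top]
      _ = ENNReal.ofReal (invGamma11 δ) * A := mul_comm _ _
  calc (∫⁻ δ in Set.Ioi (0:ℝ), ∫⁻ σ in Set.Ioi (0:ℝ),
        ENNReal.ofReal
          ((Real.Gamma (0.5 * δ + 0.5) / (Real.Gamma (0.5 * δ) * Real.sqrt δ * σ)) ^ m *
            invGamma11 σ * invGamma11 δ))
      ≤ ∫⁻ δ in Set.Ioi (0:ℝ), ENNReal.ofReal (invGamma11 δ) * A := by
        exact lintegral_mono_ae ((ae_restrict_iff' measurableSet_Ioi).2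
          (ae_of_all _ hinner))
    _ = B * A := lintegral_mul_const' _ _ hAfin.ne
    _ < ⊤ := ENNReal.mul_lt_top hBfin hAfin
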